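/- Let m ≥ 2 and n ≥ 1, and for each j = 1,…,m let x₁^j,…,xₙ^j ∈ ℝ³ be nonzero vectors. The following are equivalent: (i) there exist nonzero vectors a₁,…,a_m ∈ ℝ³ and flatland cameras A₁,…,A_m (real 2×3 matrices of rank 2) with Aⱼ·aⱼ = 0 for each j, such that for all i, j ∈ {1,…,m} and all k ∈ {1,…,n} one has Aᵢ·x_k^i ≠ 0 and Aᵢ·x_k^i ∼ Aⱼ·x_k^j; (ii) there exist nonzero vectors a₁,…,a_m ∈ ℝ³ and, for every ordered pair i ≠ j, a real 3×3 matrix F^{ij} of rank 2 with (F^{ij})ᵀ·aᵢ = 0 and F^{ij}·aⱼ = 0, such that for all such i, j and all k: (x_k^i)ᵀ·F^{ij}·x_k^j = 0, F^{ij}·x_k^j ≠ 0, and (F^{ij})ᵀ·x_k^i ≠ 0. -/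

import Mathlib

open Matrix

/-- `u ∼ v`: the vectors are equal up to a nonzero real scalar. -/
def Sim {k : ℕ} (u v : Fin k → ℝ) : Prop := ∃ c : ℝ, c ≠ 0 ∧ u = c • v

namespace Thm6Aux

noncomputable section

/-- rotation by 90 degrees -/
def Rot : Matrix (Fin 2) (Fin 2) ℝ := !![0,-1;1,0]

/-- inverse rotation -/
def Roti : Matrix (Fin 2) (Fin 2) ℝ := !![0,1;-1,0]

lemma Roti_Rot (u : Fin 2 → ℝ) : Roti *ᵥ (Rot *ᵥ u) = u := by
  funext i; fin_cases i <;>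
    simp [Rot, Roti, Matrix.mulVec, dotProduct, Fin.sum_univ_two]

lemma Rot_Roti (u : Fin 2 → ℝ) : Rot *ᵥ (Roti *ᵥ u) = u := by
  funext i; fin_cases i <;>
    simp [Rot, Roti, Matrix.mulVec, dotProduct, Fin.sum_univ_two]

lemma Rott_eq_Roti : Rotᵀ = Roti := by
  funext i j; fin_cases i <;> fin_cases j <;> simp [Rot, Roti]

lemma Rot_ne_zero {u : Fin 2 → ℝ} (hu : u ≠ 0) : Rot *ᵥ u ≠ 0 := fun h => hu (by
  rw [← Roti_Rot u, h, Matrix.mulVec_zero])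

lemma Roti_ne_zero {u : Fin 2 → ℝ} (hu : u ≠ 0) : Roti *ᵥ u ≠ 0 := fun h => hu (by
  rw [← Rot_Roti u, h, Matrix.mulVec_zero])

lemma dot_Rot_self (u : Fin 2 → ℝ) : u ⬝ᵥ (Rot *ᵥ u) = 0 := by
  simp [Rot, Matrix.mulVec, dotProduct, Fin.sum_univ_two]; ring

lemma parallel {p q : Fin 2 → ℝ} (hp : p ≠ 0) (hq : q ≠ 0)
    (h : p ⬝ᵥ (Rot *ᵥ q) = 0) : Sim p q := by
  have h' : p 1 * q 0 = p 0 * q 1 := by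
    have := h
    simp [Rot, Matrix.mulVec, dotProduct, Fin.sum_univ_two] at this
    linarith
  have hq' : q 0 ≠ 0 ∨ q 1 ≠ 0 := by
    by_contra hc
    push_neg at hc
    exact hq (funext fun i => by fin_cases i <;> simp [hc.1, hc.2])
  rcases hq' with h0 | h1
  · refine ⟨p 0 / q 0, ?_, ?_⟩
    · intro hc
      apply hp
      have hp0 : p 0 = 0 := by
        field_simp at hc; simpa using hc
      have hp1 : p 1 = 0 := by
        have := h'
        rw [hp0] at this
        simpa [h0] using this
      exact funext fun i => by fin_cases i <;> simpa [hp0, hp1]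
    · funext i
      fin_cases i <;> simp [Pi.smul_apply, smul_eq_mul] <;> field_simp
      · linarith [h']
  · refine ⟨p 1 / q 1, ?_, ?_⟩
    · intro hc
      apply hp
      have hp1 : p 1 = 0 := by
        field_simp at hc; simpa using hc
      have hp0 : p 0 = 0 := by
        have := h'
        rw [hp1] at this
        have : p 0 * q 1 = 0 := by linarith
        rcases mul_eq_zero.mp this with h | h
        · exact h
        · exact absurd h h1
      exact funext fun i => by fin_cases i <;> simpa [hp0, hp1]
    · funext i
      fin_cases i <;> simp [Pi.smul_apply, smul_eq_mul] <;> field_simp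
      · linarith [h']

lemma sim_refl {u : Fin 2 → ℝ} : Sim u u := ⟨1, one_ne_zero, (one_smul _ _).symm⟩

lemma sim_symm_trans {w u v : Fin 2 → ℝ} (h1 : Sim w u) (h2 : Sim w v) : Sim u v := by
  obtain ⟨c1, hc1, rfl⟩ := h1
  obtain ⟨c2, hc2, he⟩ := h2
  refine ⟨c1⁻¹ * c2, by simp [hc1, hc2], ?_⟩
  rw [mul_smul, ← he, inv_smul_smul₀ hc1]

lemma finrank_pi2 : Module.finrank ℝ (Fin 2 → ℝ) = 2 := by simp
lemma finrank_pi3 : Module.finrank ℝ (Fin 3 → ℝ) = 3 := by simp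

lemma inj_of_rank2 (A : Matrix (Fin 2) (Fin 3) ℝ) (h : A.rank = 2) :
    Function.Injective Aᵀ.mulVecLin := by
  rw [← LinearMap.ker_eq_bot, ← Submodule.finrank_eq_zero]
  have h1 := Aᵀ.mulVecLin.finrank_range_add_finrank_ker
  have h2 : Module.finrank ℝ (LinearMap.range Aᵀ.mulVecLin) = 2 := by
    have := (Matrix.rank_transpose A).trans h
    rwa [Matrix.rank] at this
  rw [h2, finrank_pi2] at h1
  omega

lemma surj_of_rank2 (A : Matrix (Fin 2) (Fin 3) ℝ) (h : A.rank = 2) :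
    Function.Surjective A.mulVecLin := by
  rw [← LinearMap.range_eq_top]
  apply Submodule.eq_top_of_finrank_eq
  rw [Matrix.rank] at h
  rw [h, finrank_pi2]

lemma surj_Rot : Function.Surjective Rot.mulVecLin := fun u =>
  ⟨Roti *ᵥ u, by rw [Matrix.mulVecLin_apply]; exact Rot_Roti u⟩

lemma rank_F (Ai Aj : Matrix (Fin 2) (Fin 3) ℝ) (hi : Ai.rank = 2) (hj : Aj.rank = 2) :
    (Aiᵀ * Rot * Aj).rank = 2 := by
  rw [Matrix.rank, Matrix.mul_assoc, Matrix.mulVecLin_mul, LinearMap.range_comp]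
  have hsurj : LinearMap.range (Rot * Aj).mulVecLin = ⊤ := by
    rw [LinearMap.range_eq_top, Matrix.mulVecLin_mul]
    exact surj_Rot.comp (surj_of_rank2 Aj hj)
  rw [hsurj, Submodule.map_top]
  have := (Matrix.rank_transpose Ai).trans hi
  rwa [Matrix.rank] at this

/-- the dot-with-`a` functional -/
def dotL (a : Fin 3 → ℝ) : (Fin 3 → ℝ) →ₗ[ℝ] ℝ where
  toFun v := a ⬝ᵥ v
  map_add' u v := by simp [dotProduct_add]
  map_smul' c v := by simp [dotProduct_smul]

lemma finrank_ker_dotL (a : Fin 3 → ℝ) (ha : a ≠ 0) :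
    Module.finrank ℝ (LinearMap.ker (dotL a)) = 2 := by
  have h1 := (dotL a).finrank_range_add_finrank_ker
  rw [finrank_pi3] at h1
  have hr : Module.finrank ℝ (LinearMap.range (dotL a)) = 1 := by
    have hne : LinearMap.range (dotL a) = ⊤ := by
      rw [LinearMap.range_eq_top]
      intro c
      refine ⟨(c / (a ⬝ᵥ a)) • a, ?_⟩
      have haa : a ⬝ᵥ a ≠ 0 := fun h => ha (dotProduct_self_eq_zero.mp h)
      simp only [dotL, LinearMap.coe_mk, AddHom.coe_mk, dotProduct_smul, smul_eq_mul]
      exact div_mul_cancel₀ c haa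
    rw [hne]
    simp
  omega

/-- Construct a camera with given center whose transpose has range equal to the
orthogonal complement of the center. -/
lemma exists_A0 (a0 : Fin 3 → ℝ) (ha0 : a0 ≠ 0) :
    ∃ A0 : Matrix (Fin 2) (Fin 3) ℝ, A0.rank = 2 ∧ A0 *ᵥ a0 = 0 ∧
      Function.Injective A0ᵀ.mulVecLin ∧
      (∀ v : Fin 3 → ℝ, a0 ⬝ᵥ v = 0 → v ∈ LinearMap.range A0ᵀ.mulVecLin) := by
  classical
  have hker := finrank_ker_dotL a0 ha0
  have : FiniteDimensional ℝ (LinearMap.ker (dotL a0)) := inferInstance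
  let b : Module.Basis (Fin 2) ℝ (LinearMap.ker (dotL a0)) :=
    Module.finBasisOfFinrankEq ℝ _ hker
  let A0 : Matrix (Fin 2) (Fin 3) ℝ := Matrix.of fun i => (b i : Fin 3 → ℝ)
  have hTapp : ∀ u : Fin 2 → ℝ, A0ᵀ.mulVecLin u = ((b.equivFun.symm u : LinearMap.ker (dotL a0)) : Fin 3 → ℝ) := by
    intro u
    rw [Matrix.mulVecLin_apply, Matrix.mulVec_transpose]
    have : (b.equivFun.symm u : Fin 3 → ℝ) = ∑ i, u i • (b i : Fin 3 → ℝ) := by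
      rw [Module.Basis.equivFun_symm_apply]
      push_cast
      rfl
    rw [this]
    funext j
    simp [Matrix.vecMul, dotProduct, A0, Finset.sum_apply]
  have hinj : Function.Injective A0ᵀ.mulVecLin := by
    intro u v huv
    rw [hTapp, hTapp] at huv
    exact b.equivFun.symm.injective (Subtype.coe_injective huv)
  have hrange : LinearMap.range A0ᵀ.mulVecLin = LinearMap.ker (dotL a0) := by
    apply le_antisymm
    · rintro _ ⟨u, rfl⟩
      rw [hTapp]
      exact (b.equivFun.symm u).2
    · rintro v hv
      refine ⟨b.equivFun ⟨v, hv⟩, ?_⟩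
      rw [hTapp, b.equivFun.symm_apply_apply]
  refine ⟨A0, ?_, ?_, hinj, ?_⟩
  · have : A0.rank = A0ᵀ.rank := (Matrix.rank_transpose A0).symm
    rw [this, Matrix.rank, hrange, hker]
  · funext i
    have : (b i : Fin 3 → ℝ) ∈ LinearMap.ker (dotL a0) := (b i).2
    have hd : a0 ⬝ᵥ (b i : Fin 3 → ℝ) = 0 := this
    simp only [Matrix.mulVec, Pi.zero_apply]
    show (fun j => A0 i j) ⬝ᵥ a0 = 0
    rw [dotProduct_comm]
    exact hd
  · intro v hv
    rw [hrange]
    exact hv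

lemma factor {T : (Fin 2 → ℝ) →ₗ[ℝ] (Fin 3 → ℝ)} (hT : Function.Injective T)
    (S : (Fin 3 → ℝ) →ₗ[ℝ] (Fin 3 → ℝ)) (hle : ∀ v, S v ∈ LinearMap.range T) :
    ∃ g : (Fin 3 → ℝ) →ₗ[ℝ] (Fin 2 → ℝ), ∀ v, T (g v) = S v := by
  let e := LinearEquiv.ofInjective T hT
  refine ⟨(e.symm : LinearMap.range T →ₗ[ℝ] (Fin 2 → ℝ)) ∘ₗ
    (S.codRestrict (LinearMap.range T) hle), fun v => ?_⟩
  show T (e.symm ⟨S v, hle v⟩) = S v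
  have h1 : (e (e.symm ⟨S v, hle v⟩) : Fin 3 → ℝ) = T (e.symm ⟨S v, hle v⟩) :=
    LinearEquiv.ofInjective_apply T _
  rw [← h1, e.apply_symm_apply]

/-- Build camera `B` for center `aj` from the fundamental matrix `F`. -/
lemma exists_camera (a0 aj : Fin 3 → ℝ) (A0 : Matrix (Fin 2) (Fin 3) ℝ)
    (hinj : Function.Injective A0ᵀ.mulVecLin)
    (hrange : ∀ v : Fin 3 → ℝ, a0 ⬝ᵥ v = 0 → v ∈ LinearMap.range A0ᵀ.mulVecLin)
    (F : Matrix (Fin 3) (Fin 3) ℝ) (hrk : F.rank = 2)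
    (hl : Fᵀ *ᵥ a0 = 0) (hr : F *ᵥ aj = 0) :
    ∃ B : Matrix (Fin 2) (Fin 3) ℝ, B.rank = 2 ∧ B *ᵥ aj = 0 ∧ A0ᵀ * Rot * B = F := by
  have hsub : ∀ v, F.mulVecLin v ∈ LinearMap.range A0ᵀ.mulVecLin := by
    intro v
    apply hrange
    rw [Matrix.mulVecLin_apply, Matrix.dotProduct_mulVec, ← Matrix.mulVec_transpose,
      hl, zero_dotProduct]
  obtain ⟨g, hg⟩ := factor hinj F.mulVecLin hsub
  refine ⟨LinearMap.toMatrix' (Roti.mulVecLin ∘ₗ g), ?_, ?_, ?_⟩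
  all_goals {
    set B := LinearMap.toMatrix' (Roti.mulVecLin ∘ₗ g) with hBdef
    have hBapp : ∀ v, B *ᵥ v = Roti *ᵥ (g v) := by
      intro v
      rw [← Matrix.toLin'_apply, hBdef, Matrix.toLin'_toMatrix']
      rfl
    have hmat : A0ᵀ * Rot * B = F := by
      have hv : ∀ v, (A0ᵀ * Rot * B) *ᵥ v = F *ᵥ v := by
        intro v
        rw [← Matrix.mulVec_mulVec, ← Matrix.mulVec_mulVec, hBapp, Rot_Roti]
        have := hg v
        rwa [Matrix.mulVecLin_apply, Matrix.mulVecLin_apply] at this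
      apply Matrix.toLin'.injective
      refine LinearMap.ext fun v => ?_
      rw [Matrix.toLin'_apply, Matrix.toLin'_apply, hv]
    first
    | exact hmat
    | { -- rank
        have h1 : B.rank ≤ 2 := by
          simpa using Matrix.rank_le_card_height B
        have h2 := Matrix.rank_mul_le_right (A0ᵀ * Rot) B
        rw [hmat, hrk] at h2
        omega }
    | { -- center
        have h0 : A0ᵀ *ᵥ (Rot *ᵥ (B *ᵥ aj)) = 0 := by
          rw [Matrix.mulVec_mulVec, Matrix.mulVec_mulVec, hmat, hr]
        have h1 : Rot *ᵥ (B *ᵥ aj) = 0 := by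
          apply hinj
          rw [Matrix.mulVecLin_apply, h0, map_zero]
        have h2 : B *ᵥ aj = Roti *ᵥ (Rot *ᵥ (B *ᵥ aj)) := (Roti_Rot _).symm
        rw [h2, h1, Matrix.mulVec_zero] } }

end
end Thm6Aux

open Thm6Aux

/-- Theorem 6: `m` labeled point sets admit flatland cameras producing a common
image iff pairwise compatible fundamental matrices exist. -/
theorem common_image_iff_pairwise_fundamental_matrices
    (m n : ℕ) (hm : 2 ≤ m) (hn : 1 ≤ n)
    (x : Fin m → Fin n → Fin 3 → ℝ)
    (hx : ∀ j k, x j k ≠ 0) :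
    (∃ (a : Fin m → Fin 3 → ℝ) (A : Fin m → Matrix (Fin 2) (Fin 3) ℝ),
        (∀ j, a j ≠ 0 ∧ (A j).rank = 2 ∧ (A j).mulVec (a j) = 0) ∧
        (∀ i j k, (A i).mulVec (x i k) ≠ 0 ∧
          Sim ((A i).mulVec (x i k)) ((A j).mulVec (x j k))))
    ↔
    (∃ a : Fin m → Fin 3 → ℝ, (∀ j, a j ≠ 0) ∧
        ∀ i j, i ≠ j → ∃ F : Matrix (Fin 3) (Fin 3) ℝ,
          F.rank = 2 ∧ Fᵀ.mulVec (a i) = 0 ∧ F.mulVec (a j) = 0 ∧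
          ∀ k, (x i k) ⬝ᵥ F.mulVec (x j k) = 0 ∧
            F.mulVec (x j k) ≠ 0 ∧ Fᵀ.mulVec (x i k) ≠ 0) := by
  constructor
  · rintro ⟨a, A, hA, him⟩
    refine ⟨a, fun j => (hA j).1, fun i j hij => ?_⟩
    have hti : Function.Injective (A i)ᵀ.mulVecLin := inj_of_rank2 _ (hA i).2.1
    have htj : Function.Injective (A j)ᵀ.mulVecLin := inj_of_rank2 _ (hA j).2.1
    have ht : ((A i)ᵀ * Rot * A j)ᵀ = (A j)ᵀ * (Rotᵀ * A i) := by
      rw [Matrix.transpose_mul, Matrix.transpose_mul, Matrix.transpose_transpose]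
    refine ⟨(A i)ᵀ * Rot * (A j), rank_F _ _ (hA i).2.1 (hA j).2.1, ?_, ?_, fun k => ?_⟩
    · rw [ht, ← Matrix.mulVec_mulVec, ← Matrix.mulVec_mulVec, (hA i).2.2,
        Matrix.mulVec_zero, Matrix.mulVec_zero]
    · rw [← Matrix.mulVec_mulVec, (hA j).2.2, Matrix.mulVec_zero]
    · refine ⟨?_, ?_, ?_⟩
      · rw [← Matrix.mulVec_mulVec, ← Matrix.mulVec_mulVec,
          Matrix.dotProduct_mulVec, Matrix.vecMul_transpose]
        obtain ⟨c, hc, he⟩ := (him i j k).2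
        rw [he, smul_dotProduct, dot_Rot_self, smul_zero]
      · rw [← Matrix.mulVec_mulVec, ← Matrix.mulVec_mulVec]
        intro h0
        have h1 : Rot *ᵥ (A j *ᵥ x j k) = 0 := by
          apply hti
          rw [Matrix.mulVecLin_apply, h0, map_zero]
        exact Rot_ne_zero (him j j k).1 h1
      · rw [ht, ← Matrix.mulVec_mulVec, ← Matrix.mulVec_mulVec]
        intro h0
        have h1 : Rotᵀ *ᵥ (A i *ᵥ x i k) = 0 := by
          apply htj
          rw [Matrix.mulVecLin_apply, h0, map_zero]
        rw [Rott_eq_Roti] at h1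
        exact Roti_ne_zero (him i i k).1 h1
  · rintro ⟨a, ha, hF⟩
    classical
    have hm0 : 0 < m := by omega
    let i0 : Fin m := ⟨0, hm0⟩
    obtain ⟨A0, hA0rk, hA0a, hA0inj, hA0range⟩ := exists_A0 (a i0) (ha i0)
    have hch : ∀ j : Fin m, j ≠ i0 → ∃ B : Matrix (Fin 2) (Fin 3) ℝ,
        B.rank = 2 ∧ B *ᵥ a j = 0 ∧
        ∀ k, (A0 *ᵥ x i0 k) ⬝ᵥ (Rot *ᵥ (B *ᵥ x j k)) = 0 ∧
          B *ᵥ x j k ≠ 0 ∧ A0 *ᵥ x i0 k ≠ 0 := by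
      intro j hj
      obtain ⟨F, hFrk, hFl, hFr, hFk⟩ := hF i0 j (Ne.symm hj)
      obtain ⟨B, hBrk, hBa, hmat⟩ :=
        exists_camera (a i0) (a j) A0 hA0inj hA0range F hFrk hFl hFr
      have hFapp : ∀ v, F *ᵥ v = A0ᵀ *ᵥ (Rot *ᵥ (B *ᵥ v)) := fun v => by
        rw [Matrix.mulVec_mulVec, Matrix.mulVec_mulVec, hmat]
      have ht : Fᵀ = Bᵀ * (Rotᵀ * A0) := by
        rw [← hmat, Matrix.transpose_mul, Matrix.transpose_mul,
          Matrix.transpose_transpose]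
      refine ⟨B, hBrk, hBa, fun k => ?_⟩
      obtain ⟨hdot, hFx, hFtx⟩ := hFk k
      refine ⟨?_, ?_, ?_⟩
      · rw [hFapp, Matrix.dotProduct_mulVec, Matrix.vecMul_transpose] at hdot
        exact hdot
      · intro h0
        apply hFx
        rw [hFapp, h0, Matrix.mulVec_zero, Matrix.mulVec_zero]
      · intro h0
        apply hFtx
        rw [ht, ← Matrix.mulVec_mulVec, ← Matrix.mulVec_mulVec, h0,
          Matrix.mulVec_zero, Matrix.mulVec_zero]
    choose B hBrk hBa hBim using hch
    have hone : (⟨1, by omega⟩ : Fin m) ≠ i0 := by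
      intro h
      simpa using congrArg Fin.val h
    have hA0x : ∀ k, A0 *ᵥ x i0 k ≠ 0 := fun k => (hBim _ hone k).2.2
    set A : Fin m → Matrix (Fin 2) (Fin 3) ℝ :=
      fun j => if h : j = i0 then A0 else B j h with hAdef
    have hA0' : A i0 = A0 := dif_pos rfl
    have hAj : ∀ (j) (h : j ≠ i0), A j = B j h := fun j h => dif_neg h
    have key : ∀ j k, (A j *ᵥ x j k ≠ 0) ∧ Sim (A0 *ᵥ x i0 k) (A j *ᵥ x j k) := by
      intro j k
      by_cases hj : j = i0
      · subst hj
        rw [hA0']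
        exact ⟨hA0x k, sim_refl⟩
      · rw [hAj j hj]
        exact ⟨(hBim j hj k).2.1,
          parallel (hA0x k) (hBim j hj k).2.1 (hBim j hj k).1⟩
    refine ⟨a, A, fun j => ⟨ha j, ?_, ?_⟩, fun i j k =>
      ⟨(key i k).1, sim_symm_trans (key i k).2 (key j k).2⟩⟩
    · by_cases hj : j = i0
      · subst hj; rw [hA0']; exact hA0rk
      · rw [hAj j hj]; exact hBrk j hj
    · by_cases hj : j = i0
      · subst hj; rw [hA0']; exact hA0a
      · rw [hAj j hj]; exact hBa j hj
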